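/- arXiv:2308.16694 — 3 statements merged into one kernel-verified Lean document; each statement's English description precedes it below -/
import Mathlib

section
/- Let Φ = (φ_n) be a superadditive sequence of continuous potentials with bounded variations on a subshift of finite type, and suppose μ is a σ-invariant Gibbs-type measure for Φ. Then μ is an equilibrium state for Φ: h(μ, σ) + F_*(Φ, μ) ≥ P_top(Φ, σ), where F_*(Φ, μ) = lim_n (1/n) ∫ φ_n dμ. -/
open Filter Topology MeasureTheory
open scoped Classical

open Filter Topology MeasureTheory
open scoped Classical

/-- The left shift on the full shift space. -/
def shiftMap {q : ℕ} (x : ℕ → Fin q) : ℕ → Fin q := fun n => x (n + 1)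

/-- The one-sided subshift of finite type with adjacency matrix `T`. -/
def SigmaT {q : ℕ} (T : Fin q → Fin q → Bool) : Set (ℕ → Fin q) :=
  {x | ∀ n, T (x n) (x (n + 1)) = true}

/-- A word `I` of length `n` is admissible if consecutive letters are `T`-compatible. -/
def AdmWord {q : ℕ} (T : Fin q → Fin q → Bool) {n : ℕ} (I : Fin n → Fin q) : Prop :=
  ∀ i : ℕ, (h : i + 1 < n) → T (I ⟨i, Nat.lt_of_succ_lt h⟩) (I ⟨i + 1, h⟩) = true

/-- The cylinder (inside the subshift) of a word. -/
def cylW {q : ℕ} (T : Fin q → Fin q → Bool) {n : ℕ} (I : Fin n → Fin q) : Set (ℕ → Fin q) :=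
  {x | x ∈ SigmaT T ∧ ∀ i : Fin n, x (i : ℕ) = I i}

/-- The cylinder `[x]_n` (inside the subshift) of a point. -/
def cylPt {q : ℕ} (T : Fin q → Fin q → Bool) (x : ℕ → Fin q) (n : ℕ) : Set (ℕ → Fin q) :=
  {y | y ∈ SigmaT T ∧ ∀ i < n, y i = x i}

/-- Primitivity of the adjacency matrix: all sufficiently long connections exist. -/
def Primitive {q : ℕ} (T : Fin q → Fin q → Bool) : Prop :=
  ∃ N : ℕ, 0 < N ∧ ∀ n, N ≤ n → ∀ i j : Fin q, ∃ w : ℕ → Fin q,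
    w 0 = i ∧ w n = j ∧ ∀ k < n, T (w k) (w (k + 1)) = true

/-- Superadditivity of a sequence of potentials on the subshift. -/
def Superadditive {q : ℕ} (T : Fin q → Fin q → Bool) (φ : ℕ → (ℕ → Fin q) → ℝ) : Prop :=
  ∀ n m : ℕ, 0 < n → 0 < m → ∀ x ∈ SigmaT T,
    φ n x + φ m (shiftMap^[n] x) ≤ φ (n + m) x

/-- Bounded variations of a sequence of potentials. -/
def BddVar {q : ℕ} (T : Fin q → Fin q → Bool) (φ : ℕ → (ℕ → Fin q) → ℝ) : Prop :=
  ∃ V : ℝ, ∀ n : ℕ, ∀ x ∈ SigmaT T, ∀ y ∈ SigmaT T,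
    (∀ i < n, y i = x i) → |φ n x - φ n y| ≤ V

/-- `(1/n) log Σ_{I ∈ C_n} exp(inf_{x ∈ [I]} φ_n(x))`. -/
noncomputable def pressureSeq {q : ℕ} (T : Fin q → Fin q → Bool)
    (φ : ℕ → (ℕ → Fin q) → ℝ) (n : ℕ) : ℝ :=
  (n : ℝ)⁻¹ * Real.log
    (∑ I ∈ Finset.univ.filter (fun I : Fin n → Fin q => AdmWord T I),
      Real.exp (sInf (φ n '' cylW T I)))


lemma measurableSet_SigmaT {q : ℕ} (T : Fin q → Fin q → Bool) :
    MeasurableSet (SigmaT T) := by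
  have : SigmaT T = ⋂ n : ℕ, {x : ℕ → Fin q | T (x n) (x (n+1)) = true} := by
    ext x; simp [SigmaT, Set.mem_iInter]
  rw [this]
  refine MeasurableSet.iInter fun n => ?_
  have hm : Measurable fun x : ℕ → Fin q => T (x n) (x (n+1)) :=
    (Measurable.of_discrete (f := fun p : Fin q × Fin q => T p.1 p.2)).comp' (f := fun x : ℕ → Fin q => (x n, x (n+1)))
      ((measurable_pi_apply n).prodMk (measurable_pi_apply (n+1)))
  exact hm (measurableSet_singleton true)

lemma measurableSet_cylW {q : ℕ} (T : Fin q → Fin q → Bool) {n : ℕ} (I : Fin n → Fin q) :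
    MeasurableSet (cylW T I) := by
  have : cylW T I = SigmaT T ∩ ⋂ i : Fin n, {x : ℕ → Fin q | x (i : ℕ) = I i} := by
    ext x; simp [cylW, Set.mem_iInter]
  rw [this]
  exact (measurableSet_SigmaT T).inter <| MeasurableSet.iInter fun i =>
    measurableSet_eq_fun (measurable_pi_apply (i : ℕ)) measurable_const

lemma measurableSet_cylPt {q : ℕ} (T : Fin q → Fin q → Bool) (x : ℕ → Fin q) (n : ℕ) :
    MeasurableSet (cylPt T x n) := by
  have : cylPt T x n = SigmaT T ∩ ⋂ i ∈ Set.Iio n, {y : ℕ → Fin q | y i = x i} := by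
    ext y; simp [cylPt, Set.mem_iInter]
  rw [this]
  exact (measurableSet_SigmaT T).inter <| MeasurableSet.biInter (Set.to_countable _)
    fun i _ => measurableSet_eq_fun (measurable_pi_apply i) measurable_const

section
variable {q : ℕ} (T : Fin q → Fin q → Bool)

/-- words partition: pairwise disjoint -/
lemma cylW_disjoint {n : ℕ} : Set.PairwiseDisjoint
    (↑(Finset.univ.filter (fun I : Fin n → Fin q => AdmWord T I)))
    (fun I : Fin n → Fin q => cylW T I) := by
  intro I _ J _ hIJ
  refine Set.disjoint_left.2 fun x hxI hxJ => hIJ ?_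
  funext i
  rw [← hxI.2 i, ← hxJ.2 i]

lemma cylW_biUnion {n : ℕ} :
    ⋃ I ∈ Finset.univ.filter (fun I : Fin n → Fin q => AdmWord T I), cylW T I = SigmaT T := by
  apply Set.Subset.antisymm
  · refine Set.iUnion₂_subset fun I _ => fun x hx => hx.1
  · intro x hx
    refine Set.mem_biUnion ?_ (show x ∈ cylW T (fun i : Fin n => x i) from ⟨hx, fun i => rfl⟩)
    refine Finset.mem_filter.2 ⟨Finset.mem_univ _, fun i h => hx i⟩

lemma cylW_eq_cylPt {n : ℕ} {I : Fin n → Fin q} {x : ℕ → Fin q} (hx : x ∈ cylW T I) :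
    cylW T I = cylPt T x n := by
  ext y
  constructor
  · rintro ⟨hy, h⟩
    exact ⟨hy, fun i hi => by rw [h ⟨i, hi⟩, hx.2 ⟨i, hi⟩]⟩
  · rintro ⟨hy, h⟩
    exact ⟨hy, fun i => by rw [h i i.2, hx.2 i]⟩

end

section
variable {q : ℕ} {T : Fin q → Fin q → Bool} {φ : ℕ → (ℕ → Fin q) → ℝ}
  {μ : Measure (ℕ → Fin q)} [IsProbabilityMeasure μ]

lemma restrict_eq_self' (hfull : μ (SigmaT T) = 1) : μ.restrict (SigmaT T) = μ := by
  refine Measure.restrict_eq_self_of_ae_mem ?_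
  rw [Filter.eventually_iff, mem_ae_iff]
  have := measure_compl (μ := μ) (measurableSet_SigmaT T) (by simp)
  simpa [hfull] using this

lemma integrable_phi (hcont : ∀ n, ContinuousOn (φ n) (SigmaT T))
    (hfull : μ (SigmaT T) = 1) (n : ℕ) : Integrable (φ n) μ := by
  have hres := restrict_eq_self' (T := T) hfull
  have hcompact : IsCompact (SigmaT T) := by
    refine IsClosed.isCompact ?_
    have : SigmaT T = ⋂ m : ℕ, {x : ℕ → Fin q | T (x m) (x (m+1)) = true} := by
      ext x; simp [SigmaT, Set.mem_iInter]
    rw [this]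
    refine isClosed_iInter fun m => ?_
    have hc : Continuous fun x : ℕ → Fin q => T (x m) (x (m+1)) :=
      (Continuous.comp' (f := fun x : ℕ → Fin q => (x m, x (m+1))) (continuous_of_discreteTopology
        (f := fun p : Fin q × Fin q => T p.1 p.2))
        ((continuous_apply m).prodMk (continuous_apply (m+1))))
    exact IsClosed.preimage hc (isClosed_singleton (x := true))
  obtain ⟨M, hM⟩ := hcompact.exists_bound_of_continuousOn (hcont n)
  have hmea : AEStronglyMeasurable (φ n) μ := by
    have := (hcont n).aemeasurable (μ := μ) (measurableSet_SigmaT T)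
    rw [hres] at this
    exact this.aestronglyMeasurable
  refine ⟨hmea, ?_⟩
  have hae : ∀ᵐ x ∂μ, ‖φ n x‖ ≤ M := by
    have hcompl : μ (SigmaT T)ᶜ = 0 := by
      have := measure_compl (μ := μ) (measurableSet_SigmaT T) (by simp)
      simpa [hfull] using this
    have hmem : ∀ᵐ x ∂μ, x ∈ SigmaT T := by
      rw [Filter.eventually_iff, mem_ae_iff]
      simpa using hcompl
    filter_upwards [hmem] with x hx
    exact hM x hx
  exact HasFiniteIntegral.of_bounded hae
end

section
variable {q : ℕ} {T : Fin q → Fin q → Bool} {φ : ℕ → (ℕ → Fin q) → ℝ}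
  {μ : Measure (ℕ → Fin q)} [IsProbabilityMeasure μ]

/-- `∫ φ n ≥ n • ∫ φ 1` for `n ≥ 1`. -/
lemma integral_phi_ge (hcont : ∀ n, ContinuousOn (φ n) (SigmaT T))
    (hfull : μ (SigmaT T) = 1) (hsup : Superadditive T φ)
    (hinv : MeasurePreserving shiftMap μ μ) :
    ∀ n : ℕ, 1 ≤ n → (n : ℝ) * ∫ x, φ 1 x ∂μ ≤ ∫ x, φ n x ∂μ := by
  have hint : ∀ n, Integrable (φ n) μ := integrable_phi hcont hfull
  have hmem : ∀ᵐ x ∂μ, x ∈ SigmaT T := by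
    rw [Filter.eventually_iff, mem_ae_iff]
    have := measure_compl (μ := μ) (measurableSet_SigmaT T) (by simp)
    simpa [hfull] using this
  intro n hn
  induction n with
  | zero => omega
  | succ n ih =>
    rcases Nat.eq_or_lt_of_le hn with h1 | h1
    · simp [← h1]
    · have hn1 : 1 ≤ n := by omega
      have hmapeq : μ.map (shiftMap^[n]) = μ := (hinv.iterate n).map_eq
      have hmble : AEMeasurable (shiftMap^[n] : (ℕ → Fin q) → ℕ → Fin q) μ :=
        (hinv.iterate n).measurable.aemeasurable
      have hcomp : Integrable (fun x => φ 1 (shiftMap^[n] x)) μ := by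
        have := Integrable.comp_aemeasurable (f := shiftMap^[n]) (g := φ 1)
          (by rw [hmapeq]; exact hint 1) hmble
        exact this
      have hstep : ∫ x, φ n x ∂μ + ∫ x, φ 1 (shiftMap^[n] x) ∂μ ≤ ∫ x, φ (n+1) x ∂μ := by
        rw [← integral_add (hint n) hcomp]
        refine integral_mono_ae ((hint n).add hcomp) (hint (n+1)) ?_
        filter_upwards [hmem] with x hx
        exact hsup n 1 (by omega) one_pos x hx
      have hshift : ∫ x, φ 1 (shiftMap^[n] x) ∂μ = ∫ x, φ 1 x ∂μ := by
        have := integral_map (f := φ 1) hmble (by rw [hmapeq]; exact (hint 1).1)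
        rw [hmapeq] at this
        exact this.symm
      push_cast
      calc ((n : ℝ) + 1) * ∫ x, φ 1 x ∂μ
          = (n : ℝ) * ∫ x, φ 1 x ∂μ + ∫ x, φ 1 x ∂μ := by ring
        _ ≤ ∫ x, φ n x ∂μ + ∫ x, φ 1 (shiftMap^[n] x) ∂μ := by
            rw [hshift]; exact add_le_add_left (ih hn1) _
        _ ≤ _ := hstep
end

section
variable {q : ℕ} {T : Fin q → Fin q → Bool} {φ : ℕ → (ℕ → Fin q) → ℝ}
  {μ : Measure (ℕ → Fin q)} [IsProbabilityMeasure μ]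

lemma sum_measure_cylW (hfull : μ (SigmaT T) = 1) (n : ℕ) :
    ∑ I ∈ Finset.univ.filter (fun I : Fin n → Fin q => AdmWord T I),
      (μ (cylW T I)).toReal = 1 := by
  have h := measure_biUnion_finset (μ := μ) (cylW_disjoint T (n := n))
    (fun I _ => measurableSet_cylW T I)
  rw [cylW_biUnion, hfull] at h
  have := ENNReal.toReal_sum (s := Finset.univ.filter (fun I : Fin n → Fin q => AdmWord T I))
    (f := fun I => μ (cylW T I)) (fun I _ => measure_ne_top μ _)
  rw [← h] at this
  simpa using this.symm

lemma integral_eq_sum_cylW (hcont : ∀ n, ContinuousOn (φ n) (SigmaT T))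
    (hfull : μ (SigmaT T) = 1) (n : ℕ) :
    ∫ x, φ n x ∂μ = ∑ I ∈ Finset.univ.filter (fun I : Fin n → Fin q => AdmWord T I),
      ∫ x in cylW T I, φ n x ∂μ := by
  have hint := integrable_phi hcont hfull n
  have h := integral_biUnion_finset (μ := μ) (f := φ n)
    (Finset.univ.filter (fun I : Fin n → Fin q => AdmWord T I))
    (fun I _ => measurableSet_cylW T I) (cylW_disjoint T) (fun I _ => hint.integrableOn)
  rw [cylW_biUnion] at h
  rw [← h]
  show ∫ x, φ n x ∂μ = ∫ x, φ n x ∂(μ.restrict (SigmaT T))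
  rw [restrict_eq_self' hfull]

/-- Core two-sided bound on the entropy sum. -/
lemma entropy_sum_bounds (hcont : ∀ n, ContinuousOn (φ n) (SigmaT T))
    (hfull : μ (SigmaT T) = 1) {V : ℝ}
    (hV : ∀ n : ℕ, ∀ x ∈ SigmaT T, ∀ y ∈ SigmaT T, (∀ i < n, y i = x i) → |φ n x - φ n y| ≤ V)
    {C₁ C₂ P : ℝ} (hC₁ : 0 < C₁) (hC₂ : 0 < C₂)
    (hGibbs : ∀ x ∈ SigmaT T, ∀ n : ℕ, 0 < n →
      C₁ * Real.exp (-(P * n) + φ n x) ≤ (μ (cylPt T x n)).toReal ∧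
      (μ (cylPt T x n)).toReal ≤ C₂ * Real.exp (-(P * n) + φ n x))
    {n : ℕ} (hn : 1 ≤ n) :
    ∑ I ∈ Finset.univ.filter (fun I : Fin n → Fin q => AdmWord T I),
      (μ (cylW T I)).toReal * Real.log (μ (cylW T I)).toReal
      ≤ (Real.log C₂ - P * n) + (∫ x, φ n x ∂μ + V) ∧
    (Real.log C₁ - P * n) + (∫ x, φ n x ∂μ - V) ≤
      ∑ I ∈ Finset.univ.filter (fun I : Fin n → Fin q => AdmWord T I),
        (μ (cylW T I)).toReal * Real.log (μ (cylW T I)).toReal := by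
  set A := Finset.univ.filter (fun I : Fin n → Fin q => AdmWord T I) with hA
  have hintOn : ∀ I : Fin n → Fin q, IntegrableOn (φ n) (cylW T I) μ :=
    fun I => (integrable_phi hcont hfull n).integrableOn
  -- per-cylinder bounds
  have key : ∀ I ∈ A,
      ((μ (cylW T I)).toReal * Real.log (μ (cylW T I)).toReal
        ≤ (μ (cylW T I)).toReal * (Real.log C₂ - P * n)
          + ((∫ x in cylW T I, φ n x ∂μ) + V * (μ (cylW T I)).toReal)) ∧
      ((μ (cylW T I)).toReal * (Real.log C₁ - P * n)
          + ((∫ x in cylW T I, φ n x ∂μ) - V * (μ (cylW T I)).toReal)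
        ≤ (μ (cylW T I)).toReal * Real.log (μ (cylW T I)).toReal) := by
    intro I _
    set m := (μ (cylW T I)).toReal with hm
    rcases eq_or_lt_of_le (show (0:ℝ) ≤ m from ENNReal.toReal_nonneg) with h0 | hpos
    · have hmz : μ (cylW T I) = 0 := by
        have := (ENNReal.toReal_eq_zero_iff _).1 h0.symm
        rcases this with h | h
        · exact h
        · exact absurd h (measure_ne_top μ _)
      have hiz : ∫ x in cylW T I, φ n x ∂μ = 0 := by
        rw [Measure.restrict_eq_zero.2 hmz, integral_zero_measure]
      constructor <;> simp [← h0, hiz]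
    · -- nonempty cylinder
      have hne : (cylW T I).Nonempty := by
        by_contra h
        rw [Set.not_nonempty_iff_eq_empty] at h
        rw [hm, h, measure_empty] at hpos
        simp at hpos
      obtain ⟨x, hx⟩ := hne
      have hxS : x ∈ SigmaT T := hx.1
      have hcylpt : cylW T I = cylPt T x n := cylW_eq_cylPt T hx
      have hgl := (hGibbs x hxS n (by omega)).1
      have hgu := (hGibbs x hxS n (by omega)).2
      rw [← hcylpt, ← hm] at hgl hgu
      have hexp : Real.log (C₂ * Real.exp (-(P * n) + φ n x)) =
          Real.log C₂ + (-(P * n) + φ n x) := by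
        rw [Real.log_mul (ne_of_gt hC₂) (Real.exp_ne_zero _), Real.log_exp]
      have hexp1 : Real.log (C₁ * Real.exp (-(P * n) + φ n x)) =
          Real.log C₁ + (-(P * n) + φ n x) := by
        rw [Real.log_mul (ne_of_gt hC₁) (Real.exp_ne_zero _), Real.log_exp]
      have hlogu : Real.log m ≤ Real.log C₂ + (-(P * n) + φ n x) := by
        rw [← hexp]; exact Real.log_le_log hpos hgu
      have hlogl : Real.log C₁ + (-(P * n) + φ n x) ≤ Real.log m := by
        rw [← hexp1]
        exact Real.log_le_log (by positivity) hgl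
      -- integral bounds on the cylinder
      have hgeint : (φ n x - V) * m ≤ ∫ y in cylW T I, φ n y ∂μ := by
        refine setIntegral_ge_of_const_le_real (measurableSet_cylW T I) (measure_ne_top μ _)
          (fun y hy => ?_) (hintOn I)
        have := hV n x hxS y hy.1 (fun i hi => by rw [hy.2 ⟨i, hi⟩, hx.2 ⟨i, hi⟩])
        linarith [abs_le.1 this |>.2, abs_le.1 this |>.1]
      have hleint : ∫ y in cylW T I, φ n y ∂μ ≤ (φ n x + V) * m := by
        have : ∫ y in cylW T I, φ n y ∂μ ≤ ∫ _ in cylW T I, (φ n x + V) ∂μ := by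
          refine setIntegral_mono_on (hintOn I) ((integrableOn_const_iff (by simp)).2 (Or.inr ?_))
            (measurableSet_cylW T I) (fun y hy => ?_)
          · exact (measure_lt_top μ _)
          · have := hV n x hxS y hy.1 (fun i hi => by rw [hy.2 ⟨i, hi⟩, hx.2 ⟨i, hi⟩])
            linarith [abs_le.1 this |>.1]
        simpa [mul_comm, hm, Measure.real] using this
      constructor
      · have h1 : m * Real.log m ≤ m * (Real.log C₂ + (-(P * n) + φ n x)) :=
          mul_le_mul_of_nonneg_left hlogu (le_of_lt hpos)
        nlinarith [hgeint]
      · have h1 : m * (Real.log C₁ + (-(P * n) + φ n x)) ≤ m * Real.log m :=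
          mul_le_mul_of_nonneg_left hlogl (le_of_lt hpos)
        nlinarith [hleint]
  have hsum1 := sum_measure_cylW (μ := μ) hfull n
  have hisum := integral_eq_sum_cylW (μ := μ) hcont hfull n
  rw [← hA] at hsum1 hisum
  constructor
  · calc ∑ I ∈ A, (μ (cylW T I)).toReal * Real.log (μ (cylW T I)).toReal
        ≤ ∑ I ∈ A, ((μ (cylW T I)).toReal * (Real.log C₂ - P * n)
          + ((∫ x in cylW T I, φ n x ∂μ) + V * (μ (cylW T I)).toReal)) :=
          Finset.sum_le_sum (fun I hI => (key I hI).1)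
      _ = (Real.log C₂ - P * n) + (∫ x, φ n x ∂μ + V) := by
          rw [Finset.sum_add_distrib, ← Finset.sum_mul, hsum1, Finset.sum_add_distrib,
            ← Finset.mul_sum, hsum1, ← hisum]
          ring
  · calc (Real.log C₁ - P * n) + (∫ x, φ n x ∂μ - V)
        = ∑ I ∈ A, ((μ (cylW T I)).toReal * (Real.log C₁ - P * n)
          + ((∫ x in cylW T I, φ n x ∂μ) - V * (μ (cylW T I)).toReal)) := by
          rw [Finset.sum_add_distrib, ← Finset.sum_mul, hsum1, Finset.sum_sub_distrib,
            ← Finset.mul_sum, hsum1, ← hisum]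
          ring
      _ ≤ _ := Finset.sum_le_sum (fun I hI => (key I hI).2)
end


/-- a σ-invariant Gibbs-type measure for a superadditive sequence with
bounded variations is an equilibrium state: `h(μ,σ) + F_*(Φ,μ) ≥ P_top(Φ,σ)`, where the
entropy is expressed as the limsup of the partition sums and
`F_*(Φ,μ) = sup_{n ≥ 1} (1/n) ∫ φ_n dμ (= lim_n (1/n) ∫ φ_n dμ)`. -/
theorem stmt3 {q : ℕ} (hq : 0 < q) (T : Fin q → Fin q → Bool) (hprim : Primitive T)
    (φ : ℕ → (ℕ → Fin q) → ℝ) (hcont : ∀ n, ContinuousOn (φ n) (SigmaT T))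
    (hsup : Superadditive T φ) (hbv : BddVar T φ)
    (μ : Measure (ℕ → Fin q)) [IsProbabilityMeasure μ]
    (hinv : MeasurePreserving shiftMap μ μ) (hfull : μ (SigmaT T) = 1)
    (C₁ C₂ P : ℝ) (hC₁ : 0 < C₁) (hC₂ : 0 < C₂)
    (hGibbs : ∀ x ∈ SigmaT T, ∀ n : ℕ, 0 < n →
      C₁ * Real.exp (-(P * n) + φ n x) ≤ (μ (cylPt T x n)).toReal ∧
      (μ (cylPt T x n)).toReal ≤ C₂ * Real.exp (-(P * n) + φ n x))
    (hPtop : Tendsto (pressureSeq T φ) atTop (𝓝 P)) :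
    (P : EReal) ≤
      ((atTop.limsup fun n : ℕ => -(n : ℝ)⁻¹ *
          ∑ I ∈ Finset.univ.filter (fun I : Fin n → Fin q => AdmWord T I),
            (μ (cylW T I)).toReal * Real.log (μ (cylW T I)).toReal : ℝ) : EReal) +
        ⨆ n ∈ Set.Ici (1 : ℕ),
          (((n : ℝ)⁻¹ * ∫ x in SigmaT T, φ n x ∂μ : ℝ) : EReal) := by
  obtain ⟨V, hV⟩ := hbv
  -- notation
  set H : ℕ → ℝ := fun n : ℕ => -(n : ℝ)⁻¹ *
      ∑ I ∈ Finset.univ.filter (fun I : Fin n → Fin q => AdmWord T I),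
        (μ (cylW T I)).toReal * Real.log (μ (cylW T I)).toReal with hH
  set F : ℕ → ℝ := fun n : ℕ => (n : ℝ)⁻¹ * ∫ x in SigmaT T, φ n x ∂μ with hF
  have hresint : ∀ n : ℕ, ∫ x in SigmaT T, φ n x ∂μ = ∫ x, φ n x ∂μ := by
    intro n
    show ∫ x, φ n x ∂(μ.restrict (SigmaT T)) = ∫ x, φ n x ∂μ
    rw [restrict_eq_self' hfull]
  set a : ℝ := ∫ x, φ 1 x ∂μ with ha
  -- lower and upper bounds on H n for n ≥ 1
  have hFa : ∀ n : ℕ, 1 ≤ n → a ≤ (n : ℝ)⁻¹ * ∫ x, φ n x ∂μ := by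
    intro n hn
    have hnpos : (0 : ℝ) < (n : ℝ) := by exact_mod_cast hn
    have h1 := integral_phi_ge hcont hfull hsup hinv n hn
    have h2 : (n : ℝ)⁻¹ * ((n:ℝ) * a) ≤ (n : ℝ)⁻¹ * ∫ x, φ n x ∂μ :=
      mul_le_mul_of_nonneg_left h1 (by positivity)
    calc a = (n : ℝ)⁻¹ * ((n:ℝ) * a) := by field_simp
      _ ≤ _ := h2
  -- two-sided bounds on H
  have hHlow : ∀ n : ℕ, 1 ≤ n → P - F n - (Real.log C₂ + V) * (n : ℝ)⁻¹ ≤ H n := by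
    intro n hn
    have hb := (entropy_sum_bounds hcont hfull hV hC₁ hC₂ hGibbs hn).1
    have hnpos : (0 : ℝ) < (n : ℝ) := by exact_mod_cast hn
    have hni : (n : ℝ)⁻¹ * (n : ℝ) = 1 := inv_mul_cancel₀ (ne_of_gt hnpos)
    have hinvpos : (0 : ℝ) < (n:ℝ)⁻¹ := by positivity
    have h2 : -(n:ℝ)⁻¹ * ((Real.log C₂ - P * n) + (∫ x, φ n x ∂μ + V)) ≤ H n := by
      rw [hH]
      have := mul_le_mul_of_nonneg_left hb (le_of_lt hinvpos)
      linarith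
    calc P - F n - (Real.log C₂ + V) * (n : ℝ)⁻¹
        = -(n:ℝ)⁻¹ * ((Real.log C₂ - P * n) + (∫ x, φ n x ∂μ + V)) := by
          simp only [hF]; rw [hresint n]; field_simp; ring
      _ ≤ H n := h2
  have hHup : ∀ n : ℕ, 1 ≤ n → H n ≤ P - a + |V - Real.log C₁| := by
    intro n hn
    have hb := (entropy_sum_bounds hcont hfull hV hC₁ hC₂ hGibbs hn).2
    have hnpos : (0 : ℝ) < (n : ℝ) := by exact_mod_cast hn
    have hni : (n : ℝ)⁻¹ * (n : ℝ) = 1 := inv_mul_cancel₀ (ne_of_gt hnpos)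
    have hinvpos : (0 : ℝ) < (n:ℝ)⁻¹ := by positivity
    have hinvle : (n : ℝ)⁻¹ ≤ 1 := by
      rw [inv_le_one_iff₀]; right; exact_mod_cast hn
    have h2 : H n ≤ -(n:ℝ)⁻¹ * ((Real.log C₁ - P * n) + (∫ x, φ n x ∂μ - V)) := by
      rw [hH]
      have := mul_le_mul_of_nonneg_left hb (le_of_lt hinvpos)
      linarith
    have h3 : -(n:ℝ)⁻¹ * ((Real.log C₁ - P * n) + (∫ x, φ n x ∂μ - V))
        = P - (n:ℝ)⁻¹ * ∫ x, φ n x ∂μ + (V - Real.log C₁) * (n:ℝ)⁻¹ := by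
      field_simp; ring
    have h4 : (V - Real.log C₁) * (n:ℝ)⁻¹ ≤ |V - Real.log C₁| := by
      rcases le_or_gt (V - Real.log C₁) 0 with h | h
      · calc (V - Real.log C₁) * (n:ℝ)⁻¹ ≤ 0 := mul_nonpos_of_nonpos_of_nonneg h (le_of_lt hinvpos)
          _ ≤ _ := abs_nonneg _
      · calc (V - Real.log C₁) * (n:ℝ)⁻¹ ≤ (V - Real.log C₁) * 1 :=
            mul_le_mul_of_nonneg_left hinvle (le_of_lt h)
          _ = V - Real.log C₁ := mul_one _
          _ ≤ _ := le_abs_self _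
    have h5 := hFa n hn
    linarith
  -- boundedness of H
  have hHbdd : atTop.IsBoundedUnder (· ≤ ·) H := by
    refine ⟨P - a + |V - Real.log C₁|, ?_⟩
    rw [Filter.eventually_map]
    filter_upwards [Filter.eventually_ge_atTop 1] with n hn
    exact hHup n hn
  -- the supremum term
  set S : EReal := ⨆ n ∈ Set.Ici (1 : ℕ), ((F n : ℝ) : EReal) with hS

  have hF1S : ((F 1 : ℝ) : EReal) ≤ S := by
    exact le_biSup (f := fun n => ((F n : ℝ) : EReal)) (Set.self_mem_Ici)
  have hSbot : S ≠ ⊥ := fun h => by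
    rw [h, le_bot_iff] at hF1S
    exact (EReal.coe_ne_bot _) hF1S
  rcases eq_or_ne S ⊤ with hStop | hStop
  · rw [hStop, EReal.add_top_of_ne_bot (EReal.coe_ne_bot _)]
    exact le_top
  · set s : ℝ := S.toReal with hs
    have hSs : S = (s : EReal) := (EReal.coe_toReal hStop hSbot).symm
    have hFs : ∀ n : ℕ, 1 ≤ n → F n ≤ s := by
      intro n hn
      have : ((F n : ℝ) : EReal) ≤ S :=
        le_biSup (f := fun n => ((F n : ℝ) : EReal)) hn
      rw [hSs] at this
      exact_mod_cast this
    -- limsup lower bound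
    set g : ℕ → ℝ := fun n => P - s - (Real.log C₂ + V) * (n : ℝ)⁻¹ with hg
    have hgt : Tendsto g atTop (𝓝 (P - s)) := by
      rw [hg]
      have h0 : Tendsto (fun n : ℕ => (Real.log C₂ + V) * (n : ℝ)⁻¹) atTop (𝓝 0) := by
        simpa using tendsto_const_nhds.mul (tendsto_inv_atTop_nhds_zero_nat (𝕜 := ℝ))
      simpa using tendsto_const_nhds.sub h0
    have hgH : g ≤ᶠ[atTop] H := by
      filter_upwards [Filter.eventually_ge_atTop 1] with n hn
      calc g n ≤ P - F n - (Real.log C₂ + V) * (n : ℝ)⁻¹ := by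
            have := hFs n hn; rw [hg]; simp only; linarith
        _ ≤ H n := hHlow n hn
    have hls : P - s ≤ atTop.limsup H := by
      have h1 : atTop.limsup g ≤ atTop.limsup H :=
        limsup_le_limsup hgH hgt.isCoboundedUnder_le hHbdd
      rw [hgt.limsup_eq] at h1
      exact h1
    calc (P : EReal) = ((P - s : ℝ) : EReal) + (s : EReal) := by
          rw [← EReal.coe_add]; norm_num
      _ ≤ ((atTop.limsup H : ℝ) : EReal) + (s : EReal) := by
          exact add_le_add_left (EReal.coe_le_coe_iff.2 hls) _
      _ = ((atTop.limsup H : ℝ) : EReal) + S := by rw [hSs]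
end

section
/- For every invertible real d×d matrix A and nonzero vectors u, v ∈ ℝ^d: (i) δ_P(ῡ₊(A*), v̄) ≤ ‖Av‖/(‖A‖‖v‖) ≤ δ_P(ῡ₊(A*), v̄) + γ₁₂(A), where δ_P(ū, v̄) = |⟨u,v⟩|/(‖u‖‖v‖), ῡ₊(A) is the projective direction of the top singular vector of A in its image, and γ₁₂(A) = σ₂(A)/σ₁(A) is the ratio of second to first singular values. -/
open Matrix

/-- The continuous linear map on Euclidean space induced by a matrix. -/
noncomputable def euc {d : ℕ} (A : Matrix (Fin d) (Fin d) ℝ) :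
    EuclideanSpace ℝ (Fin d) →L[ℝ] EuclideanSpace ℝ (Fin d) :=
  Matrix.toEuclideanCLM (𝕜 := ℝ) A

/-- The projective quantity `δ_P(ū, v̄) = |⟨u,v⟩| / (‖u‖‖v‖)`. -/
noncomputable def deltaP {d : ℕ} (u v : EuclideanSpace ℝ (Fin d)) : ℝ :=
  |(inner ℝ u v : ℝ)| / (‖u‖ * ‖v‖)

lemma le_of_sq_le_sq' (a b : ℝ) (ha : 0 ≤ a) (hb : 0 ≤ b) (h : a ^ 2 ≤ b ^ 2) : a ≤ b := by
  nlinarith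
lemma euc_mul {d : ℕ} (A B : Matrix (Fin d) (Fin d) ℝ) (x : EuclideanSpace ℝ (Fin d)) :
    euc (A * B) x = euc A (euc B x) := by
  simp [euc, _root_.map_mul]
lemma euc_one {d : ℕ} (x : EuclideanSpace ℝ (Fin d)) : euc (1 : Matrix (Fin d) (Fin d) ℝ) x = x := by
  simp [euc, _root_.map_one]
lemma euc_transpose_inner {d : ℕ} (M : Matrix (Fin d) (Fin d) ℝ) (x y : EuclideanSpace ℝ (Fin d)) :
    (inner ℝ (euc Mᵀ x) y : ℝ) = inner ℝ x (euc M y) := by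
  have h : Mᵀ = star M := by
    ext i j
    simp [Matrix.star_eq_conjTranspose, Matrix.conjTranspose_apply]
  rw [h]
  have : euc (star M) = ContinuousLinearMap.adjoint (euc M) := by
    simp [euc, map_star, ContinuousLinearMap.star_eq_adjoint]
  rw [this, ContinuousLinearMap.adjoint_inner_left]
lemma euc_diag {d : ℕ} (s : Fin d → ℝ) (x : EuclideanSpace ℝ (Fin d)) (i : Fin d) :
    euc (Matrix.diagonal s) x i = s i * x i := by
  show (Matrix.toLin' (Matrix.diagonal s)) x i = _
  simp [Matrix.toLin'_apply, Matrix.mulVec_diagonal]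
lemma norm_euc_orth {d : ℕ} (M : Matrix (Fin d) (Fin d) ℝ) (hM : Mᵀ * M = 1)
    (x : EuclideanSpace ℝ (Fin d)) : ‖euc M x‖ = ‖x‖ := by
  have h : (inner ℝ (euc M x) (euc M x) : ℝ) = inner ℝ x x := by
    rw [← euc_transpose_inner, ← euc_mul, hM, euc_one, real_inner_comm]
  rw [real_inner_self_eq_norm_mul_norm, real_inner_self_eq_norm_mul_norm] at h
  nlinarith [norm_nonneg (euc M x), norm_nonneg x]
lemma norm_sq_eq {d : ℕ} (x : EuclideanSpace ℝ (Fin d)) : ‖x‖ ^ 2 = ∑ i, x i ^ 2 := by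
  rw [← real_inner_self_eq_norm_sq]
  rw [PiLp.inner_apply]
  simp [sq]

/-- for `A = K D L` a singular value decomposition of an invertible matrix
(`K, L` orthogonal, `D = diagonal s` with `s` positive and decreasing) and any nonzero
`v`, writing `w = Lᵀ e₀` for the top singular direction of `A*`:
`δ_P(ῡ₊(A*), v̄) ≤ ‖Av‖/(‖A‖‖v‖) ≤ δ_P(ῡ₊(A*), v̄) + γ₁₂(A)`. -/
theorem stmt6 {d : ℕ} (hd : 2 ≤ d) (K L A : Matrix (Fin d) (Fin d) ℝ)
    (hK : K * Kᵀ = 1) (hL : L * Lᵀ = 1)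
    (s : Fin d → ℝ) (hpos : ∀ i, 0 < s i) (hanti : Antitone s)
    (hA : A = K * Matrix.diagonal s * L)
    (v : EuclideanSpace ℝ (Fin d)) (hv : v ≠ 0) :
    deltaP (euc Lᵀ (EuclideanSpace.single ⟨0, by omega⟩ 1)) v ≤
        ‖euc A v‖ / (‖euc A‖ * ‖v‖) ∧
      ‖euc A v‖ / (‖euc A‖ * ‖v‖) ≤
        deltaP (euc Lᵀ (EuclideanSpace.single ⟨0, by omega⟩ 1)) v +
          s ⟨1, by omega⟩ / s ⟨0, by omega⟩ := by
  set i0 : Fin d := ⟨0, by omega⟩ with hi0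
  set i1 : Fin d := ⟨1, by omega⟩ with hi1
  set e0 : EuclideanSpace ℝ (Fin d) := EuclideanSpace.single i0 1 with he0
  have hKtK : Kᵀ * K = 1 := mul_eq_one_comm.mp hK
  have hLtL : Lᵀ * L = 1 := mul_eq_one_comm.mp hL
  have hLtt : Lᵀᵀ * Lᵀ = 1 := by rw [Matrix.transpose_transpose]; exact hL
  set u : EuclideanSpace ℝ (Fin d) := euc L v with hu
  set D : Matrix (Fin d) (Fin d) ℝ := Matrix.diagonal s with hD
  have he0norm : ‖e0‖ = 1 := by simp [he0]
  have hwnorm : ‖euc Lᵀ e0‖ = 1 := by rw [norm_euc_orth _ hLtt, he0norm]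
  have hunorm : ‖u‖ = ‖v‖ := norm_euc_orth _ hLtL v
  have hvpos : 0 < ‖v‖ := norm_pos_iff.mpr hv
  have hs0 : 0 < s i0 := hpos i0
  have hs1 : 0 < s i1 := hpos i1
  have hs10 : s i1 ≤ s i0 := hanti (by simp [hi0, hi1, Fin.le_def])
  have hinner : (inner ℝ (euc Lᵀ e0) v : ℝ) = u i0 := by
    rw [euc_transpose_inner, he0]
    simp [hu, EuclideanSpace.inner_single_left]
  have hAv : ‖euc A v‖ = ‖euc D u‖ := by
    rw [hA, euc_mul, euc_mul, norm_euc_orth _ hKtK]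
  have hDle : ∀ y : EuclideanSpace ℝ (Fin d), ‖euc D y‖ ≤ s i0 * ‖y‖ := by
    intro y
    apply le_of_sq_le_sq' _ _ (norm_nonneg _) (mul_nonneg hs0.le (norm_nonneg y))
    rw [norm_sq_eq, mul_pow, norm_sq_eq, Finset.mul_sum]
    apply Finset.sum_le_sum
    intro i _
    have h1 : s i ≤ s i0 := hanti (by simp [hi0, Fin.le_def])
    rw [euc_diag, mul_pow]
    exact mul_le_mul_of_nonneg_right (pow_le_pow_left₀ (hpos i).le h1 2) (sq_nonneg _)
  have hAnorm : ‖euc A‖ = s i0 := by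
    apply le_antisymm
    · apply ContinuousLinearMap.opNorm_le_bound _ hs0.le
      intro x
      rw [hA, euc_mul, euc_mul, norm_euc_orth _ hKtK, ← norm_euc_orth L hLtL x]
      exact hDle (euc L x)
    · have h1 : euc A (euc Lᵀ e0) = euc K (euc D e0) := by
        rw [hA, euc_mul, euc_mul, ← euc_mul L, hL, euc_one]
      have h2 : euc D e0 = EuclideanSpace.single i0 (s i0) := by
        apply PiLp.ext
        intro i
        rw [euc_diag]
        by_cases h : i = i0 <;> simp [he0, EuclideanSpace.single_apply, h]
      have h3 : ‖euc A (euc Lᵀ e0)‖ = s i0 := by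
        rw [h1, norm_euc_orth _ hKtK, h2]
        simp [abs_of_pos hs0]
      calc s i0 = ‖euc A (euc Lᵀ e0)‖ := h3.symm
        _ ≤ ‖euc A‖ * ‖euc Lᵀ e0‖ := (euc A).le_opNorm _
        _ = ‖euc A‖ := by rw [hwnorm, mul_one]
  set N : ℝ := ‖euc D u‖ with hN
  have hNnn : 0 ≤ N := norm_nonneg _
  have hNsq : N ^ 2 = ∑ i, (s i * u i) ^ 2 := by
    rw [hN, norm_sq_eq]
    exact Finset.sum_congr rfl fun i _ => by rw [euc_diag]
  have h1 : s i0 * |u i0| ≤ N := by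
    apply le_of_sq_le_sq' _ _ (mul_nonneg hs0.le (abs_nonneg _)) hNnn
    rw [mul_pow, sq_abs, ← mul_pow, hNsq]
    exact Finset.single_le_sum (f := fun i => (s i * u i) ^ 2) (fun i _ => sq_nonneg _) (Finset.mem_univ i0)
  have h2 : N ≤ s i0 * |u i0| + s i1 * ‖v‖ := by
    have hsplit : N ^ 2 = (s i0 * u i0) ^ 2 + ∑ i ∈ Finset.univ.erase i0, (s i * u i) ^ 2 := by
      rw [hNsq, ← Finset.sum_erase_add _ _ (Finset.mem_univ i0)]
      ring
    have hrest : ∑ i ∈ Finset.univ.erase i0, (s i * u i) ^ 2 ≤ s i1 ^ 2 * ‖v‖ ^ 2 := by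
      calc ∑ i ∈ Finset.univ.erase i0, (s i * u i) ^ 2
          ≤ ∑ i ∈ Finset.univ.erase i0, s i1 ^ 2 * u i ^ 2 := by
            apply Finset.sum_le_sum
            intro i hi
            have hne : i ≠ i0 := Finset.ne_of_mem_erase hi
            have hle : s i ≤ s i1 := by
              apply hanti
              rw [Fin.le_def]
              have : (i : ℕ) ≠ 0 := by simpa [hi0, Fin.ext_iff] using hne
              simp only [hi1]
              omega
            rw [mul_pow]
            exact mul_le_mul_of_nonneg_right (pow_le_pow_left₀ (hpos i).le hle 2) (sq_nonneg _)
        _ ≤ ∑ i, s i1 ^ 2 * u i ^ 2 := by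
            apply Finset.sum_le_sum_of_subset_of_nonneg (Finset.erase_subset _ _)
            intro i _ _
            positivity
        _ = s i1 ^ 2 * ‖v‖ ^ 2 := by
            rw [← Finset.mul_sum, ← norm_sq_eq, hunorm]
    apply le_of_sq_le_sq' _ _ hNnn
      (add_nonneg (mul_nonneg hs0.le (abs_nonneg _)) (mul_nonneg hs1.le hvpos.le))
    have hcross : 0 ≤ (s i0 * |u i0|) * (s i1 * ‖v‖) :=
      mul_nonneg (mul_nonneg hs0.le (abs_nonneg _)) (mul_nonneg hs1.le hvpos.le)
    have h' : N ^ 2 ≤ (s i0 * u i0) ^ 2 + s i1 ^ 2 * ‖v‖ ^ 2 := by linarith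
    have heq : (s i0 * u i0) ^ 2 = (s i0 * |u i0|) ^ 2 := by
      rw [mul_pow, mul_pow, sq_abs]
    nlinarith [h', heq, hcross]
  rw [deltaP, hinner, hwnorm, one_mul, hAv, hAnorm]
  have hv0 : ‖v‖ ≠ 0 := hvpos.ne'
  constructor
  · rw [div_le_div_iff₀ hvpos (by positivity)]
    nlinarith [mul_nonneg (sub_nonneg.mpr h1) hvpos.le, abs_nonneg (u i0)]
  · rw [div_le_iff₀ (by positivity)]
    have hrhs : (|u i0| / ‖v‖ + s i1 / s i0) * (s i0 * ‖v‖) = s i0 * |u i0| + s i1 * ‖v‖ := by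
      field_simp
    rw [hrhs]
    exact h2
end

section
/- (Nonexistence of Gibbs-type measures for large negative t.) Let (Σ, σ) be the full shift on three symbols and A₁ = diag(λ, 1/λ) with λ > 1, A₂ = [[0,1],[1,0]], A₃ a rotation matrix, all in SL₂(ℝ) with A₂, A₃ orthogonal. Suppose μ is a σ-invariant probability measure and there exist C > 0 and P with log 2 ≤ P ≤ log 3 such that C^{-1} ≤ μ([I]) / (e^{−n P} ‖A^n(I)‖^t) ≤ C for all n and all words I of length n. Then t ≥ −log(9/2)/log λ. In other words, for t < −log(9/2)/log λ no Gibbs-type measure with pressure P ∈ [log 2, log 3] exists. -/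
open Filter Topology Matrix MeasureTheory

/-- The rotation matrix by angle `θ`. -/
noncomputable def rotMat (θ : ℝ) : Matrix (Fin 2) (Fin 2) ℝ :=
  !![Real.cos θ, -Real.sin θ; Real.sin θ, Real.cos θ]

/-- The product `A^n(I) = A_{I(n-1)} ⋯ A_{I(0)}` along a word. -/
def wordProd {m : ℕ} (A : Fin m → Matrix (Fin 2) (Fin 2) ℝ) :
    (n : ℕ) → (Fin n → Fin m) → Matrix (Fin 2) (Fin 2) ℝ
  | 0, _ => 1
  | n + 1, I => A (I (Fin.last n)) * wordProd A n (fun k => I k.castSucc)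

/-- The cylinder of a word in the full shift on `m` symbols. -/
def cylF {m n : ℕ} (I : Fin n → Fin m) : Set (ℕ → Fin m) :=
  {x | ∀ k : Fin n, x (k : ℕ) = I k}

lemma euc_apply (M : Matrix (Fin 2) (Fin 2) ℝ) (x : EuclideanSpace ℝ (Fin 2)) :
    euc M x = (WithLp.equiv 2 _).symm (M.mulVec ((WithLp.equiv 2 _) x)) := rfl

lemma norm_swap : ‖euc !![(0:ℝ),1;1,0]‖ = 1 := by
  apply le_antisymm
  · apply ContinuousLinearMap.opNorm_le_bound _ zero_le_one
    intro x
    rw [euc_apply, one_mul, EuclideanSpace.norm_eq, EuclideanSpace.norm_eq]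
    apply le_of_eq
    congr 1
    have hmv : (!![(0:ℝ),1;1,0]).mulVec (WithLp.equiv 2 (Fin 2 → ℝ) x)
        = ![x 1, x 0] := by
      funext i; fin_cases i <;>
        simp [Matrix.mulVec, dotProduct, Fin.sum_univ_two]
    show ∑ i : Fin 2, ‖((WithLp.equiv 2 (Fin 2 → ℝ)).symm
        ((!![(0:ℝ),1;1,0]).mulVec (WithLp.equiv 2 (Fin 2 → ℝ) x))) i‖^2 = _
    rw [hmv]
    simp [Fin.sum_univ_two]
    ring
  · have h := (euc !![(0:ℝ),1;1,0]).le_opNorm ((WithLp.equiv 2 (Fin 2 → ℝ)).symm ![1,0])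
    have h1 : ‖((WithLp.equiv 2 (Fin 2 → ℝ)).symm ![(1:ℝ),0])‖ = 1 := by
      rw [EuclideanSpace.norm_eq]; simp [Fin.sum_univ_two]
    have hmv : (!![(0:ℝ),1;1,0]).mulVec ![1,0] = ![0,1] := by
      funext i; fin_cases i <;> simp [Matrix.mulVec, dotProduct, Fin.sum_univ_two]
    have h2 : ‖euc !![(0:ℝ),1;1,0] ((WithLp.equiv 2 (Fin 2 → ℝ)).symm ![1,0])‖ = 1 := by
      rw [euc_apply]
      show ‖(WithLp.equiv 2 (Fin 2 → ℝ)).symm ((!![(0:ℝ),1;1,0]).mulVec ![1,0])‖ = 1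
      rw [hmv, EuclideanSpace.norm_eq]; simp [Fin.sum_univ_two]
    rw [h1, h2, mul_one] at h
    exact h

lemma norm_diag_ge (a b : ℝ) (ha : 0 ≤ a) :
    a ≤ ‖euc (Matrix.diagonal ![a, b])‖ := by
  have h := (euc (Matrix.diagonal ![a,b])).le_opNorm ((WithLp.equiv 2 (Fin 2 → ℝ)).symm ![1,0])
  have h1 : ‖((WithLp.equiv 2 (Fin 2 → ℝ)).symm ![(1:ℝ),0])‖ = 1 := by
    rw [EuclideanSpace.norm_eq]; simp [Fin.sum_univ_two]
  have hmv : (Matrix.diagonal ![a,b]).mulVec ![1,0] = ![a,0] := by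
    funext i
    fin_cases i <;> simp [Matrix.mulVec, dotProduct, Fin.sum_univ_two, Matrix.diagonal]
  have h2 : ‖euc (Matrix.diagonal ![a,b]) ((WithLp.equiv 2 (Fin 2 → ℝ)).symm ![1,0])‖ = a := by
    rw [euc_apply]
    show ‖(WithLp.equiv 2 (Fin 2 → ℝ)).symm ((Matrix.diagonal ![a,b]).mulVec ![1,0])‖ = a
    rw [hmv, EuclideanSpace.norm_eq]
    simp [Fin.sum_univ_two]
    rw [Real.sqrt_sq ha]
  rw [h1, h2, mul_one] at h
  exact h

lemma vec_mul_vec (a b c d : ℝ) : (fun i => ![a,b] i * ![c,d] i) = ![a*c, b*d] := by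
  funext i; fin_cases i <;> simp

lemma diag_one : (Matrix.diagonal ![(1:ℝ),1]) = 1 := by
  ext i j; fin_cases i <;> fin_cases j <;> simp [Matrix.diagonal, Matrix.one_apply]

section
variable (lam : ℝ) (A : Fin 3 → Matrix (Fin 2) (Fin 2) ℝ)
  (hA1 : A 0 = Matrix.diagonal ![lam, lam⁻¹]) (hA2 : A 1 = !![(0 : ℝ), 1; 1, 0])

include hA1 in
lemma prodZeros (n : ℕ) :
    wordProd A n (fun _ => 0) = Matrix.diagonal ![lam ^ n, lam⁻¹ ^ n] := by
  induction n with
  | zero => simp [wordProd, diag_one]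
  | succ n ih =>
    show A 0 * wordProd A n (fun _ => 0) = _
    rw [ih, hA1, Matrix.diagonal_mul_diagonal, vec_mul_vec, pow_succ', pow_succ']

include hA1 hA2 in
lemma prodOneAt : ∀ (L p : ℕ), p < L →
    wordProd A L (fun k => if (k : ℕ) = p then 1 else 0) =
      Matrix.diagonal ![lam ^ (L - 1 - p), lam⁻¹ ^ (L - 1 - p)] * !![(0:ℝ),1;1,0] *
        Matrix.diagonal ![lam ^ p, lam⁻¹ ^ p] := by
  intro L
  induction L with
  | zero => omega
  | succ L ih =>
    intro p hp
    show A (if ((Fin.last L : Fin (L+1)) : ℕ) = p then 1 else 0) *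
      wordProd A L (fun k => if ((k.castSucc : Fin (L+1)) : ℕ) = p then 1 else 0) = _
    simp only [Fin.val_last, Fin.coe_castSucc]
    rcases eq_or_lt_of_le (Nat.lt_succ_iff.mp hp) with hpe | hplt
    · rw [if_pos hpe.symm]
      have hz : (fun k : Fin L => if (k : ℕ) = p then (1 : Fin 3) else 0) = fun _ => 0 := by
        funext k; have hk := k.isLt; rw [if_neg (by omega)]
      rw [hz, prodZeros lam A hA1, hA2]
      have h1 : L + 1 - 1 - p = 0 := by omega
      rw [h1, pow_zero, pow_zero, diag_one, one_mul, ← hpe]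
    · rw [if_neg (by omega), ih p hplt, hA1]
      rw [← mul_assoc, ← mul_assoc, Matrix.diagonal_mul_diagonal, vec_mul_vec]
      have h2 : L + 1 - 1 - p = (L - 1 - p) + 1 := by omega
      rw [h2, pow_succ', pow_succ']

include hA1 hA2 in
lemma prodJ (n : ℕ) (hlam0 : lam ≠ 0) :
    wordProd A (2*n+1) (fun k => if (k : ℕ) = n then 1 else 0) = !![(0:ℝ),1;1,0] := by
  have h := prodOneAt lam A hA1 hA2 (2*n+1) n (by omega)
  have h1 : 2*n+1-1-n = n := by omega
  rw [h1] at h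
  rw [h]
  ext i j
  fin_cases i <;> fin_cases j <;>
    simp [Matrix.mul_apply, Fin.sum_univ_two, Matrix.diagonal, inv_pow] <;>
    field_simp

end

/-- nonexistence of Gibbs-type measures for large negative `t`: for the
full shift on three symbols with `A₁ = diag(λ, 1/λ)` (`λ > 1`), `A₂ = [[0,1],[1,0]]`,
`A₃` a rotation, if a probability measure `μ` satisfies the Gibbs bounds with constants
`C > 0` and `P ∈ [log 2, log 3]` for the potentials `t log ‖A^n‖`, then
`t ≥ −log(9/2)/log λ`. -/
theorem stmt18 (lam θ : ℝ) (hlam : 1 < lam)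
    (A : Fin 3 → Matrix (Fin 2) (Fin 2) ℝ)
    (hA1 : A 0 = Matrix.diagonal ![lam, lam⁻¹])
    (hA2 : A 1 = !![(0 : ℝ), 1; 1, 0]) (hA3 : A 2 = rotMat θ)
    (μ : Measure (ℕ → Fin 3)) [IsProbabilityMeasure μ]
    (C P t : ℝ) (hC : 0 < C) (hP1 : Real.log 2 ≤ P) (hP2 : P ≤ Real.log 3)
    (hGibbs : ∀ n : ℕ, 0 < n → ∀ I : Fin n → Fin 3,
      C⁻¹ * (Real.exp (-(P * n)) * ‖euc (wordProd A n I)‖ ^ t) ≤ (μ (cylF I)).toReal ∧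
      (μ (cylF I)).toReal ≤ C * (Real.exp (-(P * n)) * ‖euc (wordProd A n I)‖ ^ t)) :
    -Real.log (9 / 2) / Real.log lam ≤ t := by
  by_contra hcon
  push_neg at hcon
  have hlam0 : (0:ℝ) < lam := lt_trans one_pos hlam
  have hloglam : 0 < Real.log lam := Real.log_pos hlam
  have hlog92 : 0 < Real.log (9/2) := Real.log_pos (by norm_num)
  have ht0 : t ≤ 0 := le_of_lt (hcon.trans_le (by
    rw [neg_div]
    exact neg_nonpos.mpr (div_nonneg hlog92.le hloglam.le)))
  have hapos : 0 < lam ^ t := Real.rpow_pos_of_pos hlam0 t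
  have ha : lam ^ t < 1/3 := by
    have h' : t * Real.log lam < -Real.log (9/2) := by
      have := (lt_div_iff₀ hloglam).mp hcon
      linarith
    have : lam ^ t = Real.exp (Real.log lam * t) := Real.rpow_def_of_pos hlam0 t
    rw [this]
    calc Real.exp (Real.log lam * t) < Real.exp (-Real.log (9/2)) := by
          apply Real.exp_lt_exp.mpr; linarith [h']
      _ = (9/2 : ℝ)⁻¹ := by rw [Real.exp_neg, Real.exp_log (by norm_num : (0:ℝ) < 9/2)]
      _ < 1/3 := by norm_num
  set a := lam ^ t with hadef
  set r := (3 * a)⁻¹ with hrdef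
  have h3a : 0 < 3 * a := by positivity
  have h3a1 : 3 * a < 1 := by linarith
  have hr1 : 1 < r := (one_lt_inv₀ h3a).mpr h3a1
  obtain ⟨n₀, hn₀⟩ := pow_unbounded_of_one_lt (3 * C^2) hr1
  set n := n₀ + 1 with hndef
  have hrn : 3 * C^2 < r ^ n := lt_of_lt_of_le hn₀ (pow_le_pow_right₀ hr1.le (Nat.le_succ n₀))
  -- the key inequality: r ^ n ≤ 3 * C ^ 2
  have hkey : r ^ n ≤ 3 * C ^ 2 := by
    obtain ⟨hlow, -⟩ := hGibbs (2*n+1) (by omega)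
      (fun k => if (k : ℕ) = n then 1 else 0)
    obtain ⟨-, hupp⟩ := hGibbs n (by omega) (fun _ => 0)
    rw [prodJ lam A hA1 hA2 n (ne_of_gt hlam0), norm_swap, Real.one_rpow, mul_one] at hlow
    rw [prodZeros lam A hA1 n] at hupp
    have hsub : cylF (fun k : Fin (2*n+1) => if (k : ℕ) = n then (1 : Fin 3) else 0) ⊆
        cylF (fun _ : Fin n => (0 : Fin 3)) := by
      intro x hx k
      have hk := k.isLt
      have h := hx ⟨(k : ℕ), by omega⟩
      simpa [if_neg (show ¬ ((k:ℕ) = n) by omega)] using h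
    have hmono : (μ (cylF (fun k : Fin (2*n+1) => if (k : ℕ) = n then (1:Fin 3) else 0))).toReal ≤
        (μ (cylF (fun _ : Fin n => (0 : Fin 3)))).toReal :=
      ENNReal.toReal_mono (measure_ne_top μ _) (measure_mono hsub)
    have hDn : lam ^ n ≤ ‖euc (Matrix.diagonal ![lam ^ n, lam⁻¹ ^ n])‖ :=
      norm_diag_ge _ _ (by positivity)
    have hDt : ‖euc (Matrix.diagonal ![lam ^ n, lam⁻¹ ^ n])‖ ^ t ≤ (lam ^ n : ℝ) ^ t :=
      Real.rpow_le_rpow_of_nonpos (by positivity) hDn ht0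
    have hpow : ((lam ^ n : ℝ)) ^ t = a ^ n := by
      rw [hadef, ← Real.rpow_natCast lam n, ← Real.rpow_mul hlam0.le, mul_comm,
        Real.rpow_mul hlam0.le, Real.rpow_natCast]
    have h1 : C⁻¹ * Real.exp (-(P * (2*(n:ℝ)+1))) ≤ C * (Real.exp (-(P * (n:ℝ))) * a ^ n) := by
      have hc1 : ((2*n+1 : ℕ) : ℝ) = 2*(n:ℝ)+1 := by push_cast; ring
      calc C⁻¹ * Real.exp (-(P * (2*(n:ℝ)+1)))
          = C⁻¹ * Real.exp (-(P * ((2*n+1 : ℕ) : ℝ))) := by rw [hc1]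
        _ ≤ (μ (cylF (fun k : Fin (2*n+1) => if (k : ℕ) = n then (1:Fin 3) else 0))).toReal :=
            hlow
        _ ≤ (μ (cylF (fun _ : Fin n => (0 : Fin 3)))).toReal := hmono
        _ ≤ C * (Real.exp (-(P * (n:ℝ))) * ‖euc (Matrix.diagonal ![lam ^ n, lam⁻¹ ^ n])‖ ^ t) :=
            hupp
        _ ≤ C * (Real.exp (-(P * (n:ℝ))) * a ^ n) := by
            rw [← hpow]
            have hE : (0:ℝ) ≤ Real.exp (-(P * (n:ℝ))) := (Real.exp_pos _).le
            have := mul_le_mul_of_nonneg_left hDt hE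
            exact mul_le_mul_of_nonneg_left this hC.le
    set E := Real.exp (-(P * (n:ℝ))) with hEdef
    have hEpos : 0 < E := Real.exp_pos _
    set F := Real.exp (-(P * ((n:ℝ)+1))) with hFdef
    have hexp : Real.exp (-(P * (2*(n:ℝ)+1))) = E * F := by
      rw [hEdef, hFdef, ← Real.exp_add]; ring_nf
    have h2 : C⁻¹ * F ≤ C * a ^ n := by
      apply le_of_mul_le_mul_right _ hEpos
      calc C⁻¹ * F * E = C⁻¹ * Real.exp (-(P * (2*(n:ℝ)+1))) := by rw [hexp]; ring
        _ ≤ C * (E * a ^ n) := h1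
        _ = C * a ^ n * E := by ring
    have hPexp : ((3:ℝ) ^ (n+1))⁻¹ ≤ F := by
      rw [hFdef, ← Real.exp_log (show (0:ℝ) < (3:ℝ)^(n+1) by positivity), ← Real.exp_neg]
      apply Real.exp_le_exp.mpr
      rw [Real.log_pow]
      have hn1 : (0:ℝ) ≤ (n:ℝ) + 1 := by positivity
      push_cast
      nlinarith [hP2, hn1]
    have h3 : C⁻¹ * ((3:ℝ) ^ (n+1))⁻¹ ≤ C * a ^ n := by
      calc C⁻¹ * ((3:ℝ) ^ (n+1))⁻¹ ≤ C⁻¹ * F := by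
            apply mul_le_mul_of_nonneg_left hPexp (by positivity)
        _ ≤ C * a ^ n := h2
    have hone : (1:ℝ) ≤ 3 * C^2 * (3*a) ^ n := by
      have e : (1:ℝ) = (C⁻¹ * ((3:ℝ)^(n+1))⁻¹) * (C * 3^(n+1)) := by
        field_simp
      calc (1:ℝ) = (C⁻¹ * ((3:ℝ)^(n+1))⁻¹) * (C * 3^(n+1)) := e
        _ ≤ (C * a ^ n) * (C * 3^(n+1)) := by
            apply mul_le_mul_of_nonneg_right h3 (by positivity)
        _ = 3 * C^2 * (3*a) ^ n := by rw [mul_pow]; ring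
    have hpos3 : (0:ℝ) < (3*a) ^ n := by positivity
    calc r ^ n = ((3*a) ^ n)⁻¹ := by rw [hrdef, inv_pow]
      _ = 1 / (3*a) ^ n := by rw [one_div]
      _ ≤ 3 * C^2 := by rw [div_le_iff₀ hpos3]; linarith
  linarith
end
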